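/- Let θ₀ ∈ ℝ^p with ‖θ₀‖₁ ≤ K (dense model condition), let θ̂ ∈ ℝ^p satisfy ‖θ̂ − θ₀‖_∞ ≤ λ, and let θ̃ be the soft-thresholded estimator θ̃ⱼ = (|θ̂ⱼ| − λ)₊ sign(θ̂ⱼ). Then for any q ≥ 1, ‖θ̃ − θ₀‖_q ≤ 2 K^{1/q} λ^{1−1/q}. -/

import Mathlib

/-- Soft-thresholding of a scalar: `(|x| - λ)₊ · sign(x)`. -/
noncomputable def softThreshold (lam x : ℝ) : ℝ := max (|x| - lam) 0 * Real.sign x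

lemma st_sub_self_abs (lam x : ℝ) (h : 0 ≤ lam) : |softThreshold lam x - x| ≤ lam := by
  unfold softThreshold
  rcases lt_trichotomy x 0 with hx | hx | hx
  · rw [Real.sign_of_neg hx, abs_of_neg hx]
    rcases le_total (-x - lam) 0 with h1 | h1
    · rw [max_eq_right h1, abs_le]; constructor <;> nlinarith
    · rw [max_eq_left h1, abs_le]; constructor <;> nlinarith
  · simp [hx, h]
  · rw [Real.sign_of_pos hx, abs_of_pos hx]
    rcases le_total (x - lam) 0 with h1 | h1
    · rw [max_eq_right h1, abs_le]; constructor <;> nlinarith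
    · rw [max_eq_left h1, abs_le]; constructor <;> nlinarith

lemma st_abs_le (lam x : ℝ) : |softThreshold lam x| ≤ max (|x| - lam) 0 := by
  unfold softThreshold
  rw [abs_mul, abs_of_nonneg (le_max_right _ _)]
  have hs : |Real.sign x| ≤ 1 := by
    rcases lt_trichotomy x 0 with hx | hx | hx
    · rw [Real.sign_of_neg hx]; norm_num
    · simp [hx]
    · rw [Real.sign_of_pos hx]; norm_num
  nlinarith [le_max_right (|x| - lam) 0]

theorem softThreshold_dense_model_bound
    (p : ℕ) (θhat θ₀ : Fin p → ℝ) (lam K q : ℝ) (hlam : 0 ≤ lam) (hq : 1 ≤ q)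
    (hK : ∑ j, |θ₀ j| ≤ K)
    (h : ‖θhat - θ₀‖ ≤ lam) :
    (∑ j, |softThreshold lam (θhat j) - θ₀ j| ^ q) ^ ((1 : ℝ) / q)
      ≤ 2 * K ^ ((1 : ℝ) / q) * lam ^ (1 - (1 : ℝ) / q) := by
  have hqpos : (0 : ℝ) < q := lt_of_lt_of_le one_pos hq
  have hq1 : (0 : ℝ) ≤ q - 1 := by linarith
  have hK0 : 0 ≤ K := le_trans (Finset.sum_nonneg fun j _ => abs_nonneg _) hK
  set v : Fin p → ℝ := fun j => softThreshold lam (θhat j) - θ₀ j with hv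
  have hinf : ∀ j, |θhat j - θ₀ j| ≤ lam := fun j => by
    have := norm_le_pi_norm (θhat - θ₀) j
    simp only [Pi.sub_apply, Real.norm_eq_abs] at this
    exact this.trans h
  have hv2 : ∀ j, |v j| ≤ 2 * lam := fun j => by
    have h1 := st_sub_self_abs lam (θhat j) hlam
    have h2 := hinf j
    calc |v j| = |(softThreshold lam (θhat j) - θhat j) + (θhat j - θ₀ j)| := by
          ring_nf; rfl
      _ ≤ |softThreshold lam (θhat j) - θhat j| + |θhat j - θ₀ j| := abs_add_le _ _
      _ ≤ 2 * lam := by linarith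
  have hv1 : ∀ j, |v j| ≤ 2 * |θ₀ j| := fun j => by
    have h1 := st_abs_le lam (θhat j)
    have h2 := hinf j
    have h3 : |θhat j| ≤ |θ₀ j| + lam := by
      have := abs_sub_abs_le_abs_sub (θhat j) (θ₀ j)
      linarith
    have h4 : max (|θhat j| - lam) 0 ≤ |θ₀ j| :=
      max_le (by linarith) (abs_nonneg _)
    calc |v j| ≤ |softThreshold lam (θhat j)| + |θ₀ j| := abs_sub _ _
      _ ≤ 2 * |θ₀ j| := by linarith
  have hsum1 : ∑ j, |v j| ≤ 2 * K := by
    calc ∑ j, |v j| ≤ ∑ j, 2 * |θ₀ j| := Finset.sum_le_sum fun j _ => hv1 j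
      _ = 2 * ∑ j, |θ₀ j| := by rw [Finset.mul_sum]
      _ ≤ 2 * K := by linarith
  have hS : ∑ j, |v j| ^ q ≤ 2 ^ q * K * lam ^ (q - 1) := by
    have step : ∀ j, |v j| ^ q ≤ |v j| * (2 * lam) ^ (q - 1) := fun j => by
      rcases eq_or_lt_of_le (abs_nonneg (v j)) with h0 | h0
      · rw [← h0, Real.zero_rpow hqpos.ne']
        positivity
      · calc |v j| ^ q = |v j| ^ (1 + (q - 1)) := by ring_nf
          _ = |v j| * |v j| ^ (q - 1) := by
              rw [Real.rpow_add h0, Real.rpow_one]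
          _ ≤ |v j| * (2 * lam) ^ (q - 1) := by
              apply mul_le_mul_of_nonneg_left _ (abs_nonneg _)
              exact Real.rpow_le_rpow (abs_nonneg _) (hv2 j) hq1
    calc ∑ j, |v j| ^ q ≤ ∑ j, |v j| * (2 * lam) ^ (q - 1) :=
          Finset.sum_le_sum fun j _ => step j
      _ = (∑ j, |v j|) * (2 * lam) ^ (q - 1) := by rw [← Finset.sum_mul]
      _ ≤ 2 * K * (2 * lam) ^ (q - 1) := by
          apply mul_le_mul_of_nonneg_right hsum1 (Real.rpow_nonneg (by positivity) _)
      _ = 2 ^ q * K * lam ^ (q - 1) := by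
          rw [Real.mul_rpow (by norm_num) hlam]
          have : (2 : ℝ) ^ q = 2 * 2 ^ (q - 1) := by
            nth_rewrite 1 [show q = 1 + (q - 1) by ring]
            rw [Real.rpow_add (by norm_num), Real.rpow_one]
          rw [this]; ring
  have hSnn : 0 ≤ ∑ j, |v j| ^ q :=
    Finset.sum_nonneg fun j _ => Real.rpow_nonneg (abs_nonneg _) _
  calc (∑ j, |v j| ^ q) ^ ((1 : ℝ) / q)
      ≤ (2 ^ q * K * lam ^ (q - 1)) ^ ((1 : ℝ) / q) :=
        Real.rpow_le_rpow hSnn hS (by positivity)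
    _ = 2 * K ^ ((1 : ℝ) / q) * lam ^ (1 - (1 : ℝ) / q) := by
        rw [Real.mul_rpow (by positivity) (Real.rpow_nonneg hlam _),
            Real.mul_rpow (by positivity) hK0,
            ← Real.rpow_mul (by norm_num : (0:ℝ) ≤ 2),
            ← Real.rpow_mul hlam, mul_one_div_cancel hqpos.ne', Real.rpow_one]
        congr 1
        field_simp
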